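/- Let τ, σ, θ, α, π₁, π₂ > 0 and L_{xx}, L_{yy} ≥ 0, L_{yx} > 0 satisfy 1/τ ≥ L_{xx} + π₁ L_{yx}, 1/σ ≥ θ L_{yx}/π₁ + (θ/π₂ + π₂) L_{yy}, and α = θ L_{yx}/π₁ + θ L_{yy}/π₂. Then the 3×3 symmetric matrix M with rows (1/τ − L_{xx}, 0, −L_{yx}), (0, 1/σ − α, −L_{yy}), (−L_{yx}, −L_{yy}, α/θ) is positive semidefinite. -/

import Mathlib

theorem matOf_apply_aux (M : Matrix (Fin 3) (Fin 3) ℝ) (i j : Fin 3) :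
    Matrix.of M i j = M i j := rfl

/-- Lemma 2.4 / LEMMA: Noise LMI after Young's inequality:
Under the step-size conditions, the 3×3 matrix `M` is positive semidefinite. -/
theorem noise_LMI_psd
    (τ σ θ α π₁ π₂ Lxx Lyy Lyx : ℝ)
    (hτ : 0 < τ) (hσ : 0 < σ) (hθ : 0 < θ) (hα : 0 < α)
    (hπ₁ : 0 < π₁) (hπ₂ : 0 < π₂)
    (hLxx : 0 ≤ Lxx) (hLyy : 0 ≤ Lyy) (hLyx : 0 < Lyx)
    (h1 : 1 / τ ≥ Lxx + π₁ * Lyx)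
    (h2 : 1 / σ ≥ θ * Lyx / π₁ + (θ / π₂ + π₂) * Lyy)
    (h3 : α = θ * Lyx / π₁ + θ * Lyy / π₂) :
    (Matrix.of !![1 / τ - Lxx, 0, -Lyx;
                  0, 1 / σ - α, -Lyy;
                  -Lyx, -Lyy, α / θ]).PosSemidef := by
  rw [Matrix.posSemidef_iff_dotProduct_mulVec]
  constructor
  · ext i j
    fin_cases i <;> fin_cases j <;>
      simp [Matrix.IsHermitian, Matrix.conjTranspose, Matrix.transpose, Matrix.map, matOf_apply_aux]
  · intro v
    have hαθ : α / θ = Lyx / π₁ + Lyy / π₂ := by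
      rw [h3]; field_simp
    have h2' : 1 / σ - α ≥ π₂ * Lyy := by
      have e : (θ / π₂ + π₂) * Lyy = θ * Lyy / π₂ + π₂ * Lyy := by ring
      rw [h3]; linarith [h2, e]
    set a := v 0
    set b := v 1
    set c := v 2
    have key : 0 ≤ (1 / τ - Lxx) * a ^ 2 + (1 / σ - α) * b ^ 2 + (α / θ) * c ^ 2
        - 2 * Lyx * a * c - 2 * Lyy * b * c := by
      rw [hαθ]
      have hx : 0 ≤ Lyx / π₁ * (π₁ * a - c) ^ 2 := by positivity
      have hy : 0 ≤ Lyy / π₂ * (π₂ * b - c) ^ 2 := by positivity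
      have e1 : Lyx / π₁ * (π₁ * a - c) ^ 2
          = Lyx * π₁ * a ^ 2 - 2 * Lyx * a * c + Lyx / π₁ * c ^ 2 := by
        field_simp; ring
      have e2 : Lyy / π₂ * (π₂ * b - c) ^ 2
          = Lyy * π₂ * b ^ 2 - 2 * Lyy * b * c + Lyy / π₂ * c ^ 2 := by
        field_simp; ring
      nlinarith [sq_nonneg a, sq_nonneg b]
    simp only [dotProduct, Matrix.mulVec, Fin.sum_univ_three, matOf_apply_aux, Matrix.of_apply,
      Matrix.cons_val', Matrix.cons_val_zero, Matrix.cons_val_one, Matrix.head_cons,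
      Matrix.empty_val', Matrix.cons_val_fin_one, Matrix.head_fin_const, star_trivial,
      Matrix.cons_val_two, Matrix.tail_cons, RCLike.star_def, map_one]
    nlinarith [key]
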